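/- For F(λ) = σ_k(λ)^{1/k} on Γ_k^+, the sum of partial derivatives satisfies Σ_{i=1}^n ∂F/∂λ_i ≥ 1 at every point of Γ_k^+. -/

import Mathlib

open Finset

noncomputable def esymm (n k : ℕ) (x : Fin n → ℝ) : ℝ :=
  ∑ s ∈ (Finset.univ : Finset (Fin n)).powersetCard k, ∏ i ∈ s, x i

/-- σ_{k}(λ with i-th coordinate deleted) -/
noncomputable def esymmDel (n k : ℕ) (x : Fin n → ℝ) (i : Fin n) : ℝ :=
  ∑ s ∈ ((Finset.univ : Finset (Fin n)).erase i).powersetCard k, ∏ j ∈ s, x j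

def GammaPlus (n k : ℕ) : Set (Fin n → ℝ) :=
  {x | ∀ j : ℕ, 1 ≤ j → j ≤ k → 0 < esymm n j x}

namespace NewtonAux

open Polynomial

/-- real-rooted (counting multiplicity) -/
def RR (p : Polynomial ℝ) : Prop := p.natDegree ≤ Multiset.card p.roots

lemma rr_derivative {p : Polynomial ℝ} (h : RR p) : RR (Polynomial.derivative p) := by
  have h1 := p.card_roots_le_derivative
  have h2 := p.natDegree_derivative_le
  have h3 := (Polynomial.derivative p).card_roots'
  unfold RR at *
  omega

lemma rr_iterate {p : Polynomial ℝ} (h : RR p) (m : ℕ) :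
    RR (Polynomial.derivative^[m] p) := by
  induction m with
  | zero => simpa
  | succ d ih => rw [Function.iterate_succ_apply']; exact rr_derivative ih

lemma reverse_multiset_prod (m : Multiset (Polynomial ℝ)) :
    m.prod.reverse = (m.map Polynomial.reverse).prod := by
  induction m using Multiset.induction with
  | empty =>
    rw [Multiset.map_zero, Multiset.prod_zero, ← Polynomial.C_1,
      Polynomial.reverse_C]
  | cons a s ih =>
    rw [Multiset.prod_cons, Polynomial.reverse_mul_of_domain, ih, Multiset.map_cons,
      Multiset.prod_cons]

lemma reverse_X_sub_C {r : ℝ} (hr : r ≠ 0) :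
    (X - C r).reverse = C (-r) * (X - C r⁻¹) := by
  ext i
  rw [Polynomial.coeff_reverse, natDegree_X_sub_C]
  match i with
  | 0 => simp [Polynomial.revAt_le, mul_inv_cancel₀ hr]
  | 1 => simp [Polynomial.revAt_le]
  | (i+2) =>
    rw [Polynomial.revAt_eq_self_of_lt (by omega : 1 < i + 2)]
    simp [Polynomial.coeff_X, Polynomial.coeff_C]

lemma rr_reverse {p : Polynomial ℝ} (h : RR p) (h0 : p.coeff 0 ≠ 0) : RR p.reverse := by
  have hp : p ≠ 0 := fun hh => h0 (by simp [hh])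
  have hcard : Multiset.card p.roots = p.natDegree := le_antisymm p.card_roots' h
  have hroots0 : ∀ r ∈ p.roots, r ≠ 0 := by
    intro r hr hr0
    have := (Polynomial.mem_roots hp).mp hr
    rw [hr0] at this
    exact h0 (by rwa [Polynomial.coeff_zero_eq_eval_zero])
  have hfac := Polynomial.C_leadingCoeff_mul_prod_multiset_X_sub_C hcard
  have hrev : p.reverse = C (p.leadingCoeff * (p.roots.map (fun r => -r)).prod) *
      (Multiset.map (fun r => X - C r⁻¹) p.roots).prod := by
    conv_lhs => rw [← hfac]
    rw [Polynomial.reverse_mul_of_domain, Polynomial.reverse_C, reverse_multiset_prod]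
    rw [Multiset.map_map]
    have hcg : ∀ r ∈ p.roots, (Polynomial.reverse ∘ fun a => X - C a) r
        = (fun r => C (-r) * (X - C r⁻¹)) r := by
      intro r hr
      exact reverse_X_sub_C (hroots0 r hr)
    rw [Multiset.map_congr rfl hcg]
    rw [show (fun r : ℝ => C (-r) * (X - C r⁻¹)) = fun r : ℝ =>
      (fun r => C (-r)) r * (fun r => X - C r⁻¹) r from rfl]
    rw [Multiset.prod_map_mul]
    have hC : (Multiset.map (fun r : ℝ => C (-r)) p.roots).prod
        = C ((Multiset.map (fun r : ℝ => -r) p.roots).prod) := by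
      rw [map_multiset_prod (C : ℝ →+* Polynomial ℝ), Multiset.map_map]
      rfl
    rw [hC, ← mul_assoc, ← Polynomial.C_mul]
  have hlc : p.leadingCoeff ≠ 0 := Polynomial.leadingCoeff_ne_zero.mpr hp
  have hprod0 : (p.roots.map (fun r => -r)).prod ≠ 0 := by
    apply Multiset.prod_ne_zero
    intro hmem
    obtain ⟨r, hr, hr0⟩ := Multiset.mem_map.mp hmem
    exact hroots0 r hr (by linarith [hr0] )
  have hc : p.leadingCoeff * (p.roots.map (fun r => -r)).prod ≠ 0 := mul_ne_zero hlc hprod0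
  have hrootsrev : p.reverse.roots = p.roots.map (fun r => r⁻¹) := by
    rw [hrev, Polynomial.roots_C_mul _ hc,
      show (fun r : ℝ => X - C r⁻¹) = (fun a : ℝ => X - C a) ∘ (fun r : ℝ => r⁻¹) from rfl,
      ← Multiset.map_map, Polynomial.roots_multiset_prod_X_sub_C]
  have hdegrev : p.reverse.natDegree = p.natDegree := by
    rw [Polynomial.reverse_natDegree, Polynomial.natTrailingDegree_eq_zero.mpr (Or.inr h0),
      Nat.sub_zero]
  unfold RR
  rw [hdegrev, hrootsrev, Multiset.card_map, hcard]

lemma esymm_zero' (n : ℕ) (x : Fin n → ℝ) : esymm n 0 x = 1 := by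
  simp [esymm]

lemma prod_natDegree (n : ℕ) (x : Fin n → ℝ) :
    (∏ i : Fin n, (X + C (x i))).natDegree = n := by
  rw [Polynomial.natDegree_prod _ _ (fun i _ => Polynomial.X_add_C_ne_zero (x i))]
  simp [Polynomial.natDegree_X_add_C]

lemma prod_roots_card (n : ℕ) (x : Fin n → ℝ) :
    Multiset.card (∏ i : Fin n, (X + C (x i))).roots = n := by
  have hrw : (∏ i : Fin n, (X + C (x i)))
      = ((Finset.univ.val.map (fun i : Fin n => -x i)).map (fun a : ℝ => X - C a)).prod := by
    rw [Multiset.map_map, Finset.prod_eq_multiset_prod]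
    apply congrArg
    apply Multiset.map_congr rfl
    intro i _
    simp [sub_neg_eq_add]
  rw [hrw, Polynomial.roots_multiset_prod_X_sub_C]
  simp

lemma prod_coeff (n : ℕ) (x : Fin n → ℝ) {m : ℕ} (hm : m ≤ n) :
    (∏ i : Fin n, (X + C (x i))).coeff m = esymm n (n - m) x := by
  rw [Finset.prod_X_add_C_coeff _ _ (by simpa using hm)]
  simp [esymm, card_univ]

lemma newton_fact (n j : ℕ) (hj : 1 ≤ j) (hjn : j + 1 ≤ n) (x : Fin n → ℝ) :
    ((Nat.factorial (j+1) : ℝ) * (Nat.factorial (j-1)) * (Nat.factorial (n-j+1)) *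
        (Nat.factorial (n-j-1))) * (esymm n (j-1) x * esymm n (j+1) x)
      ≤ ((Nat.factorial j : ℝ) * (Nat.factorial (n-j)))^2 * (esymm n j x)^2 := by
  rcases eq_or_ne (esymm n (j+1) x) 0 with hz | hz
  · rw [hz]
    simp only [mul_zero]
    positivity
  · set P := ∏ i : Fin n, (X + C (x i)) with hP
    have hPrr : RR P := by
      unfold RR; rw [prod_natDegree, prod_roots_card]
    set D1 := Polynomial.derivative^[n-j-1] P with hD1def
    have hD1coeff : ∀ r, r ≤ j + 1 → D1.coeff r
        = (((r + (n-j-1)).descFactorial (n-j-1) : ℕ) : ℝ) * esymm n (j+1-r) x := by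
      intro r hr
      rw [hD1def, Polynomial.coeff_iterate_derivative, prod_coeff n x (by omega), nsmul_eq_mul]
      have : n - (r + (n - j - 1)) = j + 1 - r := by omega
      rw [this]
    have hdfne : ∀ a b : ℕ, b ≤ a → ((a.descFactorial b : ℕ) : ℝ) ≠ 0 := by
      intro a b hba
      simp only [ne_eq, Nat.cast_eq_zero, Nat.descFactorial_eq_zero_iff_lt]
      omega
    have hD1top : D1.coeff (j+1) ≠ 0 := by
      rw [hD1coeff (j+1) le_rfl, Nat.sub_self, esymm_zero', mul_one]
      exact hdfne _ _ (by omega)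
    have hD1deg : D1.natDegree = j + 1 := by
      refine le_antisymm ?_ (Polynomial.le_natDegree_of_ne_zero hD1top)
      have h1 := Polynomial.natDegree_iterate_derivative P (n-j-1)
      rw [← hD1def, prod_natDegree] at h1
      omega
    have hD10 : D1.coeff 0 ≠ 0 := by
      rw [hD1coeff 0 (by omega), zero_add, Nat.sub_zero]
      exact mul_ne_zero (hdfne _ _ le_rfl) hz
    have hD1rr : RR D1 := rr_iterate hPrr _
    set D2 := D1.reverse with hD2def
    have hD2rr : RR D2 := rr_reverse hD1rr hD10
    have hD2deg : D2.natDegree = j + 1 := by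
      rw [hD2def, Polynomial.reverse_natDegree,
        Polynomial.natTrailingDegree_eq_zero.mpr (Or.inr hD10), Nat.sub_zero, hD1deg]
    have hD2coeff : ∀ r, r ≤ j + 1 → D2.coeff r = D1.coeff (j + 1 - r) := by
      intro r hr
      rw [hD2def, Polynomial.coeff_reverse, hD1deg, Polynomial.revAt_le hr]
    set D3 := Polynomial.derivative^[j-1] D2 with hD3def
    have hD3rr : RR D3 := rr_iterate hD2rr _
    have hD3coeff : ∀ r, D3.coeff r
        = (((r + (j-1)).descFactorial (j-1) : ℕ) : ℝ) * D2.coeff (r + (j-1)) := by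
      intro r
      rw [hD3def, Polynomial.coeff_iterate_derivative, nsmul_eq_mul]
    have e21 : 2 + (j - 1) = j + 1 := by omega
    have e11 : 1 + (j - 1) = j := by omega
    have e01 : 0 + (j - 1) = j - 1 := by omega
    have ha2 : D3.coeff 2 = (((j+1).descFactorial (j-1) : ℕ) : ℝ) *
        ((((n-j-1).descFactorial (n-j-1) : ℕ) : ℝ) * esymm n (j+1) x) := by
      rw [hD3coeff 2, e21, hD2coeff (j+1) le_rfl, Nat.sub_self, hD1coeff 0 (by omega),
        zero_add, Nat.sub_zero]
    have ha1 : D3.coeff 1 = ((j.descFactorial (j-1) : ℕ) : ℝ) *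
        ((((n-j).descFactorial (n-j-1) : ℕ) : ℝ) * esymm n j x) := by
      rw [hD3coeff 1, e11, hD2coeff j (by omega), hD1coeff (j+1-j) (by omega)]
      have h1 : j + 1 - j = 1 := by omega
      have h2 : 1 + (n - j - 1) = n - j := by omega
      have h3 : j + 1 - 1 = j := by omega
      rw [h1, h2, h3]
    have ha0 : D3.coeff 0 = (((j-1).descFactorial (j-1) : ℕ) : ℝ) *
        ((((n-j+1).descFactorial (n-j-1) : ℕ) : ℝ) * esymm n (j-1) x) := by
      rw [hD3coeff 0, e01, hD2coeff (j-1) (by omega), hD1coeff (j+1-(j-1)) (by omega)]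
      have h1 : j + 1 - (j - 1) = 2 := by omega
      have h2 : 2 + (n - j - 1) = n - j + 1 := by omega
      have h3 : j + 1 - 2 = j - 1 := by omega
      rw [h1, h2, h3]
    have ha2ne : D3.coeff 2 ≠ 0 := by
      rw [ha2]
      exact mul_ne_zero (hdfne _ _ (by omega)) (mul_ne_zero (hdfne _ _ le_rfl) hz)
    have hD3deg : D3.natDegree = 2 := by
      refine le_antisymm ?_ (Polynomial.le_natDegree_of_ne_zero ha2ne)
      have h1 := Polynomial.natDegree_iterate_derivative D2 (j-1)
      rw [← hD3def, hD2deg] at h1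
      omega
    have hcardpos : 0 < Multiset.card D3.roots := by
      have := hD3rr
      unfold RR at this
      omega
    obtain ⟨t, ht⟩ := Multiset.card_pos_iff_exists_mem.mp hcardpos
    have hroot : D3.eval t = 0 := (Polynomial.mem_roots'.mp ht).2
    have heval : D3.coeff 0 + D3.coeff 1 * t + D3.coeff 2 * t^2 = 0 := by
      rw [Polynomial.eval_eq_sum_range, hD3deg] at hroot
      simp only [Finset.sum_range_succ, Finset.range_zero, Finset.sum_empty, zero_add,
        pow_zero, mul_one, pow_one] at hroot
      linarith [hroot]
    have hdisc : 4 * D3.coeff 2 * D3.coeff 0 ≤ D3.coeff 1 ^ 2 := by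
      have h4 : D3.coeff 2 * (D3.coeff 0 + D3.coeff 1 * t + D3.coeff 2 * t^2) = 0 := by
        rw [heval]; ring
      nlinarith [sq_nonneg (2 * D3.coeff 2 * t + D3.coeff 1), h4]
    rw [ha2, ha1, ha0] at hdisc
    -- descFactorial values
    have E2 : ((Nat.factorial (j+1) : ℕ) : ℝ) = 2 * (((j+1).descFactorial (j-1) : ℕ) : ℝ) := by
      have h := Nat.factorial_mul_descFactorial (show j - 1 ≤ j + 1 by omega)
      have h2 : j + 1 - (j - 1) = 2 := by omega
      rw [h2] at h
      exact_mod_cast h.symm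
    have E1 : ((j.descFactorial (j-1) : ℕ) : ℝ) = ((Nat.factorial j : ℕ) : ℝ) := by
      have h := Nat.factorial_mul_descFactorial (show j - 1 ≤ j by omega)
      have h2 : j - (j - 1) = 1 := by omega
      rw [h2] at h
      simp only [Nat.factorial_one, one_mul] at h
      exact_mod_cast h
    have E0 : (((j-1).descFactorial (j-1) : ℕ) : ℝ) = ((Nat.factorial (j-1) : ℕ) : ℝ) := by
      rw [Nat.descFactorial_self]
    have F2 : (((n-j-1).descFactorial (n-j-1) : ℕ) : ℝ) = ((Nat.factorial (n-j-1) : ℕ) : ℝ) := by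
      rw [Nat.descFactorial_self]
    have F1 : (((n-j).descFactorial (n-j-1) : ℕ) : ℝ) = ((Nat.factorial (n-j) : ℕ) : ℝ) := by
      have h := Nat.factorial_mul_descFactorial (show n - j - 1 ≤ n - j by omega)
      have h2 : n - j - (n - j - 1) = 1 := by omega
      rw [h2] at h
      simp only [Nat.factorial_one, one_mul] at h
      exact_mod_cast h
    have F0 : ((Nat.factorial (n-j+1) : ℕ) : ℝ)
        = 2 * (((n-j+1).descFactorial (n-j-1) : ℕ) : ℝ) := by
      have h := Nat.factorial_mul_descFactorial (show n - j - 1 ≤ n - j + 1 by omega)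
      have h2 : n - j + 1 - (n - j - 1) = 2 := by omega
      rw [h2] at h
      exact_mod_cast h.symm
    calc ((Nat.factorial (j+1) : ℝ) * (Nat.factorial (j-1)) * (Nat.factorial (n-j+1)) *
        (Nat.factorial (n-j-1))) * (esymm n (j-1) x * esymm n (j+1) x)
        = 4 * ((((j+1).descFactorial (j-1) : ℕ) : ℝ) *
            ((((n-j-1).descFactorial (n-j-1) : ℕ) : ℝ) * esymm n (j+1) x)) *
          ((((j-1).descFactorial (j-1) : ℕ) : ℝ) *
            ((((n-j+1).descFactorial (n-j-1) : ℕ) : ℝ) * esymm n (j-1) x)) := by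
          rw [E2, E0, F2, F0]; ring
      _ ≤ (((j.descFactorial (j-1) : ℕ) : ℝ) *
            ((((n-j).descFactorial (n-j-1) : ℕ) : ℝ) * esymm n j x)) ^ 2 := hdisc
      _ = ((Nat.factorial j : ℝ) * (Nat.factorial (n-j)))^2 * (esymm n j x)^2 := by
          rw [E1, F1]; ring

lemma newton_choose (n j : ℕ) (hj : 1 ≤ j) (hjn : j + 1 ≤ n) (x : Fin n → ℝ) :
    ((n.choose j : ℝ))^2 * (esymm n (j-1) x * esymm n (j+1) x)
      ≤ ((n.choose (j-1) : ℝ) * (n.choose (j+1))) * (esymm n j x)^2 := by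
  have hf := newton_fact n j hj hjn x
  have h1 := Nat.choose_mul_factorial_mul_factorial (show j ≤ n by omega)
  have h2 := Nat.choose_mul_factorial_mul_factorial (show j - 1 ≤ n by omega)
  have h3 := Nat.choose_mul_factorial_mul_factorial (show j + 1 ≤ n by omega)
  rw [show n - (j-1) = n - j + 1 by omega] at h2
  rw [show n - (j+1) = n - j - 1 by omega] at h3
  have H1 : ((n.choose j : ℝ) * (Nat.factorial j) * (Nat.factorial (n-j)))
      = (Nat.factorial n : ℝ) := by exact_mod_cast congrArg (Nat.cast (R := ℝ)) h1
  have H2 : ((n.choose (j-1) : ℝ) * (Nat.factorial (j-1)) * (Nat.factorial (n-j+1)))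
      = (Nat.factorial n : ℝ) := by exact_mod_cast congrArg (Nat.cast (R := ℝ)) h2
  have H3 : ((n.choose (j+1) : ℝ) * (Nat.factorial (j+1)) * (Nat.factorial (n-j-1)))
      = (Nat.factorial n : ℝ) := by exact_mod_cast congrArg (Nat.cast (R := ℝ)) h3
  have key : (((Nat.factorial j : ℝ) * (Nat.factorial (n-j)))^2) * ((n.choose j : ℝ))^2
      = (((Nat.factorial (j+1) : ℝ) * (Nat.factorial (j-1)) * (Nat.factorial (n-j+1)) *
        (Nat.factorial (n-j-1)))) * ((n.choose (j-1) : ℝ) * (n.choose (j+1))) := by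
    calc (((Nat.factorial j : ℝ) * (Nat.factorial (n-j)))^2) * ((n.choose j : ℝ))^2
        = ((n.choose j : ℝ) * (Nat.factorial j) * (Nat.factorial (n-j)))^2 := by ring
      _ = ((n.choose (j-1) : ℝ) * (Nat.factorial (j-1)) * (Nat.factorial (n-j+1))) *
          ((n.choose (j+1) : ℝ) * (Nat.factorial (j+1)) * (Nat.factorial (n-j-1))) := by
            rw [H1, H2, H3]; ring
      _ = _ := by ring
  have hapos : (0:ℝ) < ((Nat.factorial (j+1) : ℝ) * (Nat.factorial (j-1)) *
      (Nat.factorial (n-j+1)) * (Nat.factorial (n-j-1))) := by positivity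
  have h5 : ((Nat.factorial (j+1) : ℝ) * (Nat.factorial (j-1)) * (Nat.factorial (n-j+1)) *
      (Nat.factorial (n-j-1))) * (((n.choose j : ℝ))^2 * (esymm n (j-1) x * esymm n (j+1) x))
      ≤ ((Nat.factorial (j+1) : ℝ) * (Nat.factorial (j-1)) * (Nat.factorial (n-j+1)) *
      (Nat.factorial (n-j-1))) * (((n.choose (j-1) : ℝ) * (n.choose (j+1))) *
        (esymm n j x)^2) := by
    calc ((Nat.factorial (j+1) : ℝ) * (Nat.factorial (j-1)) * (Nat.factorial (n-j+1)) *
      (Nat.factorial (n-j-1))) * (((n.choose j : ℝ))^2 * (esymm n (j-1) x * esymm n (j+1) x))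
        = ((n.choose j : ℝ))^2 * (((Nat.factorial (j+1) : ℝ) * (Nat.factorial (j-1)) *
            (Nat.factorial (n-j+1)) * (Nat.factorial (n-j-1))) *
            (esymm n (j-1) x * esymm n (j+1) x)) := by ring
      _ ≤ ((n.choose j : ℝ))^2 * (((Nat.factorial j : ℝ) * (Nat.factorial (n-j)))^2 *
            (esymm n j x)^2) := by
          exact mul_le_mul_of_nonneg_left hf (by positivity)
      _ = ((((Nat.factorial j : ℝ) * (Nat.factorial (n-j)))^2) * ((n.choose j : ℝ))^2) *
            (esymm n j x)^2 := by ring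
      _ = _ := by rw [key]; ring
  exact le_of_mul_le_mul_left h5 hapos

lemma maclaurin (n k : ℕ) (hk : 1 ≤ k) (hkn : k ≤ n) (x : Fin n → ℝ)
    (hpos : ∀ j, 1 ≤ j → j ≤ k → 0 < esymm n j x) :
    (esymm n k x / (n.choose k : ℝ)) ^ (k-1) ≤ (esymm n (k-1) x / (n.choose (k-1) : ℝ)) ^ k := by
  set p : ℕ → ℝ := fun m => esymm n m x / (n.choose m : ℝ) with hp
  have hppos : ∀ m, m ≤ k → 0 < p m := by
    intro m hm
    rcases Nat.eq_zero_or_pos m with h0 | h0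
    · simp [hp, h0, esymm_zero']
    · exact div_pos (hpos m h0 hm) (by exact_mod_cast Nat.choose_pos (le_trans hm hkn))
  have hnewton : ∀ m, 1 ≤ m → m + 1 ≤ k → p (m-1) * p (m+1) ≤ p m ^ 2 := by
    intro m hm1 hmk
    have hc := newton_choose n m hm1 (by omega) x
    have hc1 : (0:ℝ) < (n.choose (m-1) : ℝ) * (n.choose (m+1) : ℝ) := by
      have := Nat.choose_pos (show m - 1 ≤ n by omega)
      have := Nat.choose_pos (show m + 1 ≤ n by omega)
      positivity
    have hc2 : (0:ℝ) < ((n.choose m : ℝ))^2 := by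
      have := Nat.choose_pos (show m ≤ n by omega)
      positivity
    rw [hp]
    simp only
    rw [div_mul_div_comm, div_pow, div_le_div_iff₀ hc1 hc2]
    calc esymm n (m-1) x * esymm n (m+1) x * (n.choose m : ℝ)^2
        = ((n.choose m : ℝ))^2 * (esymm n (m-1) x * esymm n (m+1) x) := by ring
      _ ≤ ((n.choose (m-1) : ℝ) * (n.choose (m+1))) * (esymm n m x)^2 := hc
      _ = esymm n m x ^ 2 * ((n.choose (m-1) : ℝ) * (n.choose (m+1))) := by ring
  have claim : ∀ m, 1 ≤ m → m ≤ k → p m ^ (m-1) ≤ p (m-1) ^ m := by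
    intro m hm1
    induction m, hm1 using Nat.le_induction with
    | base => intro _; simp [hp, esymm_zero']
    | succ m hm ih =>
      intro hmk
      rw [Nat.add_sub_cancel]
      have hN := hnewton m hm hmk
      have IH := ih (by omega)
      have pm1 := hppos (m-1) (by omega)
      have pm := hppos m (by omega)
      have pmp := hppos (m+1) hmk
      have h1 : p (m+1) ^ m * p m ^ (m-1) ≤ p (m+1) ^ m * p (m-1) ^ m :=
        mul_le_mul_of_nonneg_left IH (pow_nonneg pmp.le m)
      have h2 : p (m+1) ^ m * p (m-1) ^ m = (p (m-1) * p (m+1)) ^ m := by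
        rw [mul_pow]; ring
      have h3 : (p (m-1) * p (m+1)) ^ m ≤ (p m ^ 2) ^ m :=
        pow_le_pow_left₀ (by positivity) hN m
      have h4 : (p m ^ 2) ^ m = p m ^ (m+1) * p m ^ (m-1) := by
        rw [← pow_mul, ← pow_add]
        congr 1
        omega
      have h5 : p (m+1) ^ m * p m ^ (m-1) ≤ p m ^ (m+1) * p m ^ (m-1) := by
        calc p (m+1) ^ m * p m ^ (m-1) ≤ p (m+1) ^ m * p (m-1) ^ m := h1
          _ = (p (m-1) * p (m+1)) ^ m := h2
          _ ≤ (p m ^ 2) ^ m := h3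
          _ = p m ^ (m+1) * p m ^ (m-1) := h4
      exact le_of_mul_le_mul_right h5 (pow_pos pm (m-1))
  exact claim k hk le_rfl

lemma sum_esymmDel (n m : ℕ) (x : Fin n → ℝ) :
    ∑ i : Fin n, esymmDel n m x i = ((n - m : ℕ) : ℝ) * esymm n m x := by
  unfold esymmDel
  have hps : ∀ i : Fin n, (((Finset.univ : Finset (Fin n)).erase i).powersetCard m)
      = ((Finset.univ : Finset (Fin n)).powersetCard m).filter (fun s => i ∉ s) := by
    intro i
    ext s
    simp only [Finset.mem_powersetCard, Finset.mem_filter, Finset.subset_erase,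
      Finset.subset_univ, true_and]
    tauto
  calc ∑ i : Fin n, ∑ s ∈ (((Finset.univ : Finset (Fin n)).erase i).powersetCard m),
        ∏ j ∈ s, x j
      = ∑ i : Fin n, ∑ s ∈ (Finset.univ : Finset (Fin n)).powersetCard m,
          (if i ∉ s then ∏ j ∈ s, x j else 0) := by
        refine Finset.sum_congr rfl fun i _ => ?_
        rw [hps i, Finset.sum_filter]
    _ = ∑ s ∈ (Finset.univ : Finset (Fin n)).powersetCard m,
          ∑ i : Fin n, (if i ∉ s then ∏ j ∈ s, x j else 0) := Finset.sum_comm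
    _ = ∑ s ∈ (Finset.univ : Finset (Fin n)).powersetCard m, ((n - m : ℕ) : ℝ) *
          ∏ j ∈ s, x j := by
        refine Finset.sum_congr rfl fun s hs => ?_
        have hcard : s.card = m := (Finset.mem_powersetCard.mp hs).2
        rw [← Finset.sum_filter]
        rw [Finset.sum_const]
        have hfil : (Finset.univ : Finset (Fin n)).filter (fun i => i ∉ s) = sᶜ := by
          ext i; simp
        rw [hfil, Finset.card_compl, hcard, Fintype.card_fin, nsmul_eq_mul]
    _ = ((n - m : ℕ) : ℝ) * esymm n m x := by
        rw [← Finset.mul_sum]; rfl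

end NewtonAux

open NewtonAux in
theorem stmt_12 (n k : ℕ) (hk : 1 ≤ k) (hkn : k ≤ n) :
    ∀ x ∈ GammaPlus n k,
      (∑ i : Fin n, esymmDel n (k - 1) x i) / ((k : ℝ) * (esymm n k x) ^ (((k : ℝ) - 1) / k)) ≥ 1 := by
  intro x hx
  have hσk : 0 < esymm n k x := hx k hk le_rfl
  have hσk1 : 0 < esymm n (k-1) x := by
    rcases eq_or_lt_of_le hk with h1 | h1
    · rw [show k - 1 = 0 by omega, esymm_zero']; exact one_pos
    · exact hx (k-1) (by omega) (by omega)
  have hkpos : (0:ℝ) < (k : ℝ) := by exact_mod_cast hk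
  have hrpos : 0 < esymm n k x ^ (((k : ℝ) - 1) / k) := Real.rpow_pos_of_pos hσk _
  rw [ge_iff_le, le_div_iff₀ (by positivity), one_mul, sum_esymmDel]
  -- identities and positivity for binomials
  have hCk : (0:ℝ) < (n.choose k : ℝ) := by exact_mod_cast Nat.choose_pos hkn
  have hCk1 : (0:ℝ) < (n.choose (k-1) : ℝ) := by
    exact_mod_cast Nat.choose_pos (show k - 1 ≤ n by omega)
  have hC1 : (1:ℝ) ≤ (n.choose k : ℝ) := by exact_mod_cast Nat.choose_pos hkn
  set pk : ℝ := esymm n k x / (n.choose k : ℝ) with hpk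
  set pk1 : ℝ := esymm n (k-1) x / (n.choose (k-1) : ℝ) with hpk1
  have hpkpos : 0 < pk := div_pos hσk hCk
  have hpk1pos : 0 < pk1 := div_pos hσk1 hCk1
  have hm : pk ^ (k-1) ≤ pk1 ^ k := maclaurin n k hk hkn x hx
  -- step 1 : pk ^ e ≤ pk1 where e = ((k:ℝ)-1)/k
  have hcast : ((k:ℝ) - 1) = ((k-1 : ℕ) : ℝ) := by
    rw [Nat.cast_sub hk, Nat.cast_one]
  have hstep1 : pk ^ (((k : ℝ) - 1) / k) ≤ pk1 := by
    have h1 : pk ^ (((k : ℝ) - 1) / k) = (pk ^ (k - 1 : ℕ)) ^ ((k:ℝ)⁻¹) := by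
      rw [← Real.rpow_natCast pk (k-1), ← Real.rpow_mul hpkpos.le, ← hcast]
      rw [div_eq_mul_inv]
    have h2 : pk1 = (pk1 ^ (k : ℕ)) ^ ((k:ℝ)⁻¹) := by
      rw [← Real.rpow_natCast pk1 k, ← Real.rpow_mul hpk1pos.le,
        mul_inv_cancel₀ (ne_of_gt hkpos), Real.rpow_one]
    rw [h1, h2]
    exact Real.rpow_le_rpow (by positivity) hm (by positivity)
  -- step 2 : σk ^ e ≤ C1 * pk1
  have hsplit : esymm n k x = (n.choose k : ℝ) * pk := by
    rw [hpk, mul_div_cancel₀ _ (ne_of_gt hCk)]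
  have hstep2 : esymm n k x ^ (((k : ℝ) - 1) / k) ≤ (n.choose k : ℝ) * pk1 := by
    rw [hsplit, Real.mul_rpow (by positivity) hpkpos.le]
    have hexp : ((k:ℝ) - 1) / k ≤ 1 := by
      rw [div_le_one hkpos]; linarith
    have hCle : (n.choose k : ℝ) ^ (((k : ℝ) - 1) / k) ≤ (n.choose k : ℝ) := by
      calc (n.choose k : ℝ) ^ (((k : ℝ) - 1) / k) ≤ (n.choose k : ℝ) ^ (1:ℝ) :=
            Real.rpow_le_rpow_of_exponent_le hC1 hexp
        _ = (n.choose k : ℝ) := Real.rpow_one _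
    exact mul_le_mul hCle hstep1 (by positivity) (by positivity)
  -- final : k * (C1 * pk1) = (n - (k-1)) * σ_{k-1}
  have hid : (k : ℝ) * (n.choose k : ℝ) = ((n - (k-1) : ℕ) : ℝ) * (n.choose (k-1) : ℝ) := by
    have h := Nat.choose_succ_right_eq n (k-1)
    rw [show k - 1 + 1 = k by omega] at h
    have h' : k * n.choose k = (n - (k-1)) * n.choose (k-1) := by
      rw [mul_comm, h, mul_comm]
    exact_mod_cast congrArg (Nat.cast (R := ℝ)) h'
  calc (k : ℝ) * esymm n k x ^ (((k : ℝ) - 1) / k)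
      ≤ (k : ℝ) * ((n.choose k : ℝ) * pk1) := by
        exact mul_le_mul_of_nonneg_left hstep2 hkpos.le
    _ = ((n - (k-1) : ℕ) : ℝ) * ((n.choose (k-1) : ℝ) * pk1) := by
        rw [← mul_assoc, hid, mul_assoc]
    _ = ((n - (k-1) : ℕ) : ℝ) * esymm n (k-1) x := by
        rw [hpk1, mul_div_cancel₀ _ (ne_of_gt hCk1)]
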